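/- arXiv:1305.2874 — 2 statements merged into one kernel-verified Lean document; each statement's English description precedes it below -/
import Mathlib

section
/- Let $V$ be a finite-dimensional vector space over a field $F$ of characteristic zero, and let $\phi : V \times V \to F$ be a nondegenerate symplectic (alternating) bilinear form. Let $\mathrm{Sp}(V, \phi)$ be the group of linear automorphisms preserving $\phi$. Then the space of $\mathrm{Sp}(V,\phi)$-invariant bilinear forms on $V$ (i.e. $\mathrm{Sp}(V,\phi)$-equivariant linear maps $V \otimes V \to F$ for the trivial action on $F$) is one-dimensional, spanned by $\phi$. -/
/-- The space of `Sp(V,φ)`-invariant bilinear forms on a finite-dimensional symplectic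
space `(V, φ)` over a field of characteristic zero is spanned by `φ`. -/
theorem symplectic_invariant_bilinear_forms
    {F V : Type*} [Field F] [CharZero F] [AddCommGroup V] [Module F V]
    [FiniteDimensional F V]
    (φ : LinearMap.BilinForm F V) (hnd : φ.Nondegenerate)
    (halt : ∀ v : V, φ v v = 0)
    (ψ : LinearMap.BilinForm F V)
    (hψ : ∀ g : V ≃ₗ[F] V, (∀ v w : V, φ (g v) (g w) = φ v w) →
      ∀ v w : V, ψ (g v) (g w) = ψ v w) :
    ∃ c : F, ψ = c • φ := by
  -- skew-symmetry of φ
  have hskew : ∀ v w : V, φ w v = - φ v w := by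
    intro v w
    have h := halt (v + w)
    simp only [map_add, LinearMap.add_apply, halt v, halt w, zero_add, add_zero] at h
    linear_combination h
  -- symplectic transvections
  have mkT : ∀ (u : V) (t : F), ∃ g : V ≃ₗ[F] V, ∀ v, g v = v + (t * φ v u) • u := by
    intro u t
    set A : V →ₗ[F] V := (LinearMap.toSpanSingleton F V u).comp (t • φ.flip u) with hA
    have hAv : ∀ v, A v = (t * φ v u) • u := by
      intro v
      simp [hA, LinearMap.toSpanSingleton_apply, LinearMap.flip_apply, smul_smul]
    refine ⟨LinearEquiv.ofLinear (LinearMap.id + A) (LinearMap.id - A) ?_ ?_, ?_⟩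
    · ext v
      simp [hAv, map_sub, map_smul, halt u, smul_smul, mul_comm]
    · ext v
      simp [hAv, map_add, map_smul, halt u, smul_smul, mul_comm]
    · intro v
      simp [LinearEquiv.ofLinear_apply, hAv]
  -- the key identities from invariance under transvections
  have pair : ∀ u v w : V,
      φ w u * ψ v u + φ v u * ψ u w = 0 ∧ φ v u * φ w u * ψ u u = 0 := by
    intro u v w
    have inv : ∀ t : F,
        (t * φ w u) * ψ v u + (t * φ v u) * ψ u w
          + (t * φ v u) * ((t * φ w u) * ψ u u) = 0 := by
      intro t
      obtain ⟨g, hg⟩ := mkT u t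
      have hsymp : ∀ v w : V, φ (g v) (g w) = φ v w := by
        intro a b
        rw [hg a, hg b]
        simp only [map_add, map_smul, LinearMap.add_apply, LinearMap.smul_apply,
          smul_eq_mul, halt u]
        linear_combination (t * φ a u) * hskew b u
      have h := hψ g hsymp v w
      rw [hg v, hg w] at h
      simp only [map_add, map_smul, LinearMap.add_apply, LinearMap.smul_apply,
        smul_eq_mul] at h
      linear_combination h
    have h1 := inv 1
    have h2 := inv (-1)
    constructor
    · linear_combination (h1 - h2) / 2
    · linear_combination (h1 + h2) / 2
  -- ψ vanishes on the diagonal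
  have hψdiag : ∀ u : V, ψ u u = 0 := by
    intro u
    rcases eq_or_ne u 0 with rfl | hu
    · simp
    · obtain ⟨v, hv⟩ : ∃ v, φ u v ≠ 0 := by
        by_contra h
        push_neg at h
        exact hu (hnd.1 u h)
      have hvu : φ v u ≠ 0 := by
        rw [hskew u v]  -- φ v u = - φ u v
        simpa using hv
      have h := (pair u v v).2
      rcases mul_eq_zero.mp h with h' | h'
      · exact absurd (mul_eq_zero.mp h') (by simp [hvu])
      · exact h'
  -- ψ is skew-symmetric
  have hskewψ : ∀ u v : V, ψ u v = - ψ v u := by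
    intro u v
    -- first: if φ v u ≠ 0 then done, from pair with w := v
    have base : ∀ u v : V, φ v u ≠ 0 → ψ u v = - ψ v u := by
      intro u v hvu
      have h := (pair u v v).1
      have : φ v u * (ψ v u + ψ u v) = 0 := by linear_combination h
      rcases mul_eq_zero.mp this with h' | h'
      · exact absurd h' hvu
      · linear_combination h'
    rcases eq_or_ne u 0 with rfl | hu
    · simp
    · obtain ⟨w, hw⟩ : ∃ w, φ u w ≠ 0 := by
        by_contra h
        push_neg at h
        exact hu (hnd.1 u h)
      have hwu : φ w u ≠ 0 := by rw [hskew u w]; simpa using hw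
      rcases eq_or_ne (φ v u) 0 with hvu | hvu
      · have h1 : ψ u (v + w) = - ψ (v + w) u := by
          apply base
          simp only [map_add, LinearMap.add_apply, hvu, zero_add]
          exact hwu
        have h2 : ψ u w = - ψ w u := base u w hwu
        simp only [map_add, LinearMap.add_apply] at h1
        linear_combination h1 - h2
      · exact base u v hvu
  -- pointwise proportionality
  have prop : ∀ u v w : V, φ w u * ψ v u = φ v u * ψ w u := by
    intro u v w
    have h := (pair u v w).1
    have h2 := hskewψ u w
    linear_combination h - φ v u * h2
  have local_prop : ∀ u w₁ : V, φ w₁ u ≠ 0 →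
      ∀ v, ψ v u = (ψ w₁ u / φ w₁ u) * φ v u := by
    intro u w₁ hw₁ v
    have h := prop u v w₁
    field_simp
    linear_combination h
  -- compare the constants at two vectors connected by φ
  have eqc : ∀ (u₁ u₂ : V) (c₁ c₂ : F), (∀ v, ψ v u₁ = c₁ * φ v u₁) →
      (∀ v, ψ v u₂ = c₂ * φ v u₂) → φ u₂ u₁ ≠ 0 → c₁ = c₂ := by
    intro u₁ u₂ c₁ c₂ h1 h2 hne
    have e1 : ψ u₂ u₁ = c₁ * φ u₂ u₁ := h1 u₂
    have e2 : ψ u₂ u₁ = c₂ * φ u₂ u₁ := by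
      linear_combination hskewψ u₂ u₁ - h2 u₁ - c₂ * hskew u₁ u₂
    have : (c₁ - c₂) * φ u₂ u₁ = 0 := by linear_combination e2 - e1
    rcases mul_eq_zero.mp this with h | h
    · linear_combination h
    · exact absurd h hne
  rcases subsingleton_or_nontrivial V with hV | hV
  · refine ⟨0, ?_⟩
    ext v w
    have : v = (0 : V) := Subsingleton.elim _ _
    simp [this]
  · obtain ⟨u₀, hu₀⟩ := exists_ne (0 : V)
    obtain ⟨w₀', hw₀'⟩ : ∃ w, φ u₀ w ≠ 0 := by
      by_contra h; push_neg at h; exact hu₀ (hnd.1 u₀ h)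
    have hw₀ : φ w₀' u₀ ≠ 0 := by rw [hskew u₀ w₀']; simpa using hw₀'
    set c : F := ψ w₀' u₀ / φ w₀' u₀ with hc
    have hc0 : ∀ v, ψ v u₀ = c * φ v u₀ := local_prop u₀ w₀' hw₀
    refine ⟨c, ?_⟩
    ext v u
    simp only [LinearMap.smul_apply, smul_eq_mul]
    -- goal: ψ v u = c * φ v u
    rcases eq_or_ne u 0 with rfl | hu
    · simp
    · obtain ⟨w₁', hw₁'⟩ : ∃ w, φ u w ≠ 0 := by
        by_contra h; push_neg at h; exact hu (hnd.1 u h)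
      have hw₁ : φ w₁' u ≠ 0 := by rw [hskew u w₁']; simpa using hw₁'
      -- find w with φ w u ≠ 0 and φ w u₀ ≠ 0
      obtain ⟨w, hwu, hwu₀⟩ : ∃ w, φ w u ≠ 0 ∧ φ w u₀ ≠ 0 := by
        rcases eq_or_ne (φ w₁' u₀) 0 with h1 | h1
        · rcases eq_or_ne (φ w₀' u) 0 with h2 | h2
          · refine ⟨w₁' + w₀', ?_, ?_⟩ <;>
              simp only [map_add, LinearMap.add_apply, h1, h2, add_zero, zero_add]
            · exact hw₁
            · exact hw₀
          · exact ⟨w₀', h2, hw₀⟩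
        · exact ⟨w₁', hw₁, h1⟩
      -- the constant at w
      have huw : φ u w ≠ 0 := by rw [hskew w u]; simpa using hwu
      set cw : F := ψ u w / φ u w with hcw
      have hcwp : ∀ v, ψ v w = cw * φ v w := local_prop w u huw
      set cu : F := ψ w u / φ w u with hcu
      have hcup : ∀ v, ψ v u = cu * φ v u := local_prop u w hwu
      have e1 : cu = cw := eqc u w cu cw hcup hcwp hwu
      have e2 : c = cw := eqc u₀ w c cw hc0 hcwp hwu₀
      rw [hcup v, e1, ← e2]
end

section
/- Let $V$ be a finite-dimensional vector space over a field $F$ of characteristic zero equipped with a nondegenerate symmetric bilinear form $\phi$, and let $\mathrm{O}(V,\phi)$ be its orthogonal group. Then the space of $\mathrm{O}(V,\phi)$-invariant bilinear forms on $V$ is one-dimensional, spanned by $\phi$. -/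
/-- The space of `O(V,φ)`-invariant bilinear forms on a finite-dimensional vector space
with a nondegenerate symmetric bilinear form `φ` over a field of characteristic zero is
spanned by `φ`. -/
theorem orthogonal_invariant_bilinear_forms
    {F V : Type*} [Field F] [CharZero F] [AddCommGroup V] [Module F V]
    [FiniteDimensional F V]
    (φ : LinearMap.BilinForm F V) (hnd : φ.Nondegenerate)
    (hsymm : ∀ v w : V, φ v w = φ w v)
    (ψ : LinearMap.BilinForm F V)
    (hψ : ∀ g : V ≃ₗ[F] V, (∀ v w : V, φ (g v) (g w) = φ v w) →
      ∀ v w : V, ψ (g v) (g w) = ψ v w) :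
    ∃ c : F, ψ = c • φ := by
  -- key reflection identity
  have refl_key : ∀ v : V, φ v v ≠ 0 → ∀ x : V, ψ x v * φ v v = ψ v v * φ v x := by
    intro v hv x
    set q := φ v v with hq
    set f : V →ₗ[F] V := LinearMap.id - (2/q) • (LinearMap.smulRight (φ v) v) with hfdef
    have hfapp : ∀ y : V, f y = y - ((2/q) * φ v y) • v := by
      intro y
      simp [hfdef, LinearMap.smulRight_apply, smul_smul]
    have hphif : ∀ y : V, φ v (f y) = - φ v y := by
      intro y
      rw [hfapp, map_sub, map_smul, smul_eq_mul, ← hq]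
      field_simp
      ring
    have hinv : Function.Involutive f := by
      intro y
      rw [hfapp (f y), hphif y, hfapp y]
      have : (2/q) * (- φ v y) = -((2/q) * φ v y) := by ring
      rw [this, neg_smul, sub_neg_eq_add, sub_add_cancel]
    set g := LinearEquiv.ofInvolutive f hinv with hgdef
    have hgapp : ∀ y : V, g y = f y := fun y => rfl
    have hpres : ∀ x y : V, φ (g x) (g y) = φ x y := by
      intro x y
      rw [hgapp, hgapp, hfapp, hfapp]
      simp only [map_sub, map_smul, LinearMap.sub_apply, LinearMap.smul_apply, smul_eq_mul]
      rw [hsymm x v, ← hq]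
      field_simp
      ring
    have hgv : g v = -v := by
      rw [hgapp, hfapp, ← hq, div_mul_cancel₀ 2 hv]
      rw [two_smul]
      abel
    have hmain := hψ g hpres x v
    rw [hgv, hgapp, hfapp, map_neg, map_sub, map_smul] at hmain
    simp only [LinearMap.sub_apply, LinearMap.smul_apply, smul_eq_mul, LinearMap.neg_apply] at hmain
    field_simp at hmain
    linear_combination (-1/2 : F) * hmain
  -- fact1 : explicit scalar relation for anisotropic vectors
  have fact1 : ∀ v : V, φ v v ≠ 0 → ∀ x : V, ψ x v = (ψ v v / φ v v) * φ x v := by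
    intro v hv x
    rw [hsymm x v]
    field_simp
    linear_combination refl_key v hv x
  -- trivial case: totally isotropic (then V = 0)
  by_cases hall : ∀ v : V, φ v v = 0
  · refine ⟨0, ?_⟩
    have hzero : ∀ x : V, x = 0 := by
      intro x
      apply hnd.1
      intro n
      have h := hall (x + n)
      simp only [map_add, LinearMap.add_apply] at h
      rw [hall x, hall n, hsymm n x] at h
      linear_combination h / 2
    ext x y
    rw [hzero x]
    simp
  push_neg at hall
  obtain ⟨v₀, hv₀⟩ := hall
  -- fact2 : the ratio is constant among anisotropic vectors
  have fact2 : ∀ v w : V, φ v v ≠ 0 → φ w w ≠ 0 →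
      ψ v v / φ v v = ψ w w / φ w w := by
    intro v w hv hw
    by_cases hdep : ∃ s : F, w = s • v
    · obtain ⟨s, rfl⟩ := hdep
      have hs : s ≠ 0 := by
        rintro rfl
        simp at hw
      simp only [map_smul, LinearMap.smul_apply, smul_eq_mul]
      field_simp
    · have key : ∀ t : F, t ≠ 0 → φ (v + t • w) (v + t • w) ≠ 0 →
          ψ v v / φ v v = ψ w w / φ w w := by
        intro t ht hu
        set u := v + t • w with hudef
        set cv := ψ v v / φ v v with hcv
        set cw := ψ w w / φ w w with hcw
        set cu := ψ u u / φ u u with hcu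
        have hx : ∀ x : V, φ x ((cv - cu) • v + (t * (cw - cu)) • w) = 0 := by
          intro x
          have e1 := fact1 u hu x
          have e2 := fact1 v hv x
          have e3 := fact1 w hw x
          have e4 : ψ x u = ψ x v + t * ψ x w := by
            simp [hudef]
          have e5 : φ x u = φ x v + t * φ x w := by
            simp [hudef]
          simp only [map_add, map_smul, smul_eq_mul]
          linear_combination e1 - e2 - t * e3 - e4 + cu * e5
        have hzero : (cv - cu) • v + (t * (cw - cu)) • w = 0 := by
          apply hnd.1
          intro n
          rw [hsymm]
          exact hx n
        by_cases hb : t * (cw - cu) = 0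
        · have h' : cw - cu = 0 := by
            rcases mul_eq_zero.mp hb with h | h
            · exact absurd h ht
            · exact h
          have hcwu : cw = cu := sub_eq_zero.mp h'
          rw [hb, zero_smul, add_zero] at hzero
          have hv0 : v ≠ 0 := by
            rintro rfl
            simp at hv
          rcases smul_eq_zero.mp hzero with h | h
          · rw [sub_eq_zero.mp h, hcwu]
          · exact absurd h hv0
        · exfalso
          apply hdep
          refine ⟨-((cv - cu) / (t * (cw - cu))), ?_⟩
          have h' : (t * (cw - cu)) • w = -((cv - cu) • v) := by
            rw [eq_neg_iff_add_eq_zero, add_comm]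
            exact hzero
          calc w = (t * (cw - cu))⁻¹ • ((t * (cw - cu)) • w) := by
                rw [smul_smul, inv_mul_cancel₀ hb, one_smul]
            _ = -((cv - cu) / (t * (cw - cu))) • v := by
                rw [h', smul_neg, smul_smul, ← neg_smul]
                congr 1
                field_simp
      by_cases h1 : φ (v + w) (v + w) ≠ 0
      · have := key 1 one_ne_zero (by simpa using h1)
        exact this
      · push_neg at h1
        by_cases h2 : φ (v + (-1 : F) • w) (v + (-1 : F) • w) ≠ 0
        · exact key (-1) (by norm_num) h2
        · push_neg at h2
          apply key 2 two_ne_zero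
          simp only [map_add, map_smul, LinearMap.add_apply, LinearMap.smul_apply,
            smul_eq_mul, neg_smul, one_smul, map_neg, LinearMap.neg_apply] at h1 h2 ⊢
          rw [hsymm w v] at h1 h2 ⊢
          intro h3
          apply hv
          linear_combination h1 + h2 / 3 - h3 / 3
  set c := ψ v₀ v₀ / φ v₀ v₀ with hc
  have main : ∀ x y : V, ψ x y = c * φ x y := by
    intro x y
    by_cases hy : φ y y ≠ 0
    · rw [fact1 y hy x, fact2 y v₀ hy hv₀]
    · push_neg at hy
      have hex : ∃ t : F, t ≠ 0 ∧ φ (y + t • v₀) (y + t • v₀) ≠ 0 := by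
        by_cases h1 : φ (y + v₀) (y + v₀) ≠ 0
        · exact ⟨1, one_ne_zero, by simpa using h1⟩
        · push_neg at h1
          refine ⟨-1, by norm_num, ?_⟩
          intro h2
          apply hv₀
          simp only [map_add, map_smul, LinearMap.add_apply, LinearMap.smul_apply,
            smul_eq_mul, neg_smul, one_smul, map_neg, LinearMap.neg_apply] at h1 h2
          linear_combination (h1 + h2) / 2 - hy
      obtain ⟨t, ht, hu⟩ := hex
      set u := y + t • v₀ with hudef
      have e1 : ψ x u = c * φ x u := by
        rw [fact1 u hu x, fact2 u v₀ hu hv₀]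
      have e2 : ψ x v₀ = c * φ x v₀ := fact1 v₀ hv₀ x
      have e4 : ψ x u = ψ x y + t * ψ x v₀ := by simp [hudef]
      have e5 : φ x u = φ x y + t * φ x v₀ := by simp [hudef]
      linear_combination e1 - e4 + c * e5 - t * e2
  refine ⟨c, ?_⟩
  ext x y
  simp only [LinearMap.smul_apply, smul_eq_mul]
  exact main x y
end
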